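/- Let C be a bounded subset of a finite-dimensional real normed vector space V, and let A, B be closed cones in V with (-A) ∩ B = {0}. Then the set (C - A) ∩ B is bounded. -/
import Mathlib


open scoped Pointwise

/-- If `C` is bounded and `A, B` are closed cones with `(-A) ∩ B = {0}`
in a finite-dimensional real normed space, then `(C - A) ∩ B` is bounded. -/
theorem bounded_inter_of_closed_cones
    {V : Type*} [NormedAddCommGroup V] [NormedSpace ℝ V] [FiniteDimensional ℝ V]
    (A B C : Set V)
    (hC : Bornology.IsBounded C)
    (hAclosed : IsClosed A) (hBclosed : IsClosed B)
    (hAadd : ∀ x ∈ A, ∀ y ∈ A, x + y ∈ A)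
    (hAsmul : ∀ (c : ℝ), 0 ≤ c → ∀ x ∈ A, c • x ∈ A)
    (hA0 : (0 : V) ∈ A)
    (hBadd : ∀ x ∈ B, ∀ y ∈ B, x + y ∈ B)
    (hBsmul : ∀ (c : ℝ), 0 ≤ c → ∀ x ∈ B, c • x ∈ B)
    (hB0 : (0 : V) ∈ B)
    (hAB : (-A) ∩ B = {0}) :
    Bornology.IsBounded ((C - A) ∩ B) := by
  by_contra hbd
  rw [isBounded_iff_forall_norm_le] at hbd
  push_neg at hbd
  -- choose an unbounded sequence
  have hseq : ∀ n : ℕ, ∃ x ∈ (C - A) ∩ B, (n : ℝ) + 1 < ‖x‖ := fun n => hbd ((n : ℝ) + 1)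
  choose x hxmem hxnorm using hseq
  have hxpos : ∀ n, (0 : ℝ) < ‖x n‖ := fun n =>
    lt_trans (by positivity) (hxnorm n)
  -- decompose x n = c n - a n
  have hdecomp : ∀ n, ∃ c ∈ C, ∃ a ∈ A, c - a = x n := fun n => (hxmem n).1
  choose c hc a ha hca using hdecomp
  -- normalized sequence
  set y : ℕ → V := fun n => ‖x n‖⁻¹ • x n with hy
  have hysphere : ∀ n, y n ∈ Metric.sphere (0 : V) 1 := by
    intro n
    simp only [hy, mem_sphere_iff_norm, sub_zero, norm_smul, norm_inv, norm_norm]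
    exact inv_mul_cancel₀ (hxpos n).ne'
  obtain ⟨u, hu_mem, φ, hφ, hconv⟩ :=
    (isCompact_sphere (0 : V) 1).tendsto_subseq hysphere
  -- bound on c
  obtain ⟨M, hM⟩ := isBounded_iff_forall_norm_le.mp hC
  -- ‖x n‖⁻¹ → 0
  have hinv0 : Filter.Tendsto (fun n : ℕ => ‖x n‖⁻¹) Filter.atTop (nhds 0) := by
    apply squeeze_zero (fun n => by positivity) (fun n => ?_) tendsto_one_div_add_atTop_nhds_zero_nat
    rw [one_div]
    exact inv_anti₀ (by positivity) (hxnorm n).le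
  -- ‖x n‖⁻¹ • c n → 0
  have hcz : Filter.Tendsto (fun n : ℕ => ‖x n‖⁻¹ • c n) Filter.atTop (nhds 0) := by
    refine squeeze_zero_norm (fun n => ?_) (by simpa using hinv0.mul_const M)
    rw [norm_smul, norm_inv, norm_norm]
    exact mul_le_mul_of_nonneg_left (hM _ (hc n)) (by positivity)
  -- u ∈ B
  have huB : u ∈ B := by
    refine hBclosed.mem_of_tendsto (hconv) (Filter.Eventually.of_forall fun n => ?_)
    exact hBsmul _ (by positivity) _ (hxmem (φ n)).2
  -- -u ∈ A
  have hzA : Filter.Tendsto (fun n : ℕ => ‖x (φ n)‖⁻¹ • a (φ n)) Filter.atTop (nhds (-u)) := by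
    have heq : ∀ n : ℕ, ‖x (φ n)‖⁻¹ • a (φ n) = ‖x (φ n)‖⁻¹ • c (φ n) - y (φ n) := by
      intro n
      rw [hy]
      rw [← smul_sub]
      congr 1
      rw [← hca (φ n)]
      abel
    simp only [heq]
    have := ((hcz.comp (hφ.tendsto_atTop)).sub hconv)
    simpa using this
  have huA : -u ∈ A := by
    refine hAclosed.mem_of_tendsto hzA (Filter.Eventually.of_forall fun n => ?_)
    exact hAsmul _ (by positivity) _ (ha (φ n))
  have : u ∈ (-A) ∩ B := ⟨Set.mem_neg.mpr huA, huB⟩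
  rw [hAB] at this
  rw [Set.mem_singleton_iff] at this
  rw [this] at hu_mem
  simp at hu_mem
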